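/- For every natural number n and all integers m and t such that G_k ≠ 0 for every integer k with t−1 ≤ k ≤ n+t+3, one has ∑_{j=1}^n (−F_{m+2})^{n−j}·F_{m−3}^{j−1}·G_{j+t+m} / (G_{j+t−2}·G_{j+t−1}·G_{j+t}·G_{j+t+1}·G_{j+t+2}·G_{j+t+3}) = F_{m−3}^n / (5·G_{n+t−1}·G_{n+t}·G_{n+t+1}·G_{n+t+2}·G_{n+t+3}) − (−F_{m+2})^n / (5·G_{t−1}·G_t·G_{t+1}·G_{t+2}·G_{t+3}), where the sum and both fractions are taken in ℚ. -/

import Mathlib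

theorem gib_add (F : ℤ → ℤ) (hF0 : F 0 = 0) (hF1 : F 1 = 1)
    (hF : ∀ k : ℤ, F (k + 2) = F (k + 1) + F k)
    (G : ℤ → ℤ) (hG : ∀ k : ℤ, G (k + 2) = G (k + 1) + G k) :
    ∀ m k : ℤ, G (k + m) = F m * G (k + 1) + F (m - 1) * G k := by
  have hFm1 : F (-1) = 1 := by
    have h := hF (-1)
    norm_num at h
    omega
  intro m
  induction m using Int.induction_on with
  | zero => intro k; norm_num [hF0, hFm1]
  | succ i ih =>
    intro k
    have h1 := ih (k + 1)
    have e : k + ((i : ℤ) + 1) = k + 1 + i := by ring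
    rw [e, h1]
    have hFi : F ((i : ℤ) + 1) = F i + F ((i:ℤ) - 1) := by
      have := hF ((i : ℤ) - 1)
      rw [show (i:ℤ) - 1 + 2 = (i:ℤ) + 1 by ring, show (i:ℤ) - 1 + 1 = (i:ℤ) by ring] at this
      linarith
    have hGk : G (k + 1 + 1) = G (k + 1) + G k := by
      have := hG k; rw [show k + 2 = k + 1 + 1 by ring] at this; linarith
    rw [hGk, show (i:ℤ) + 1 - 1 = (i:ℤ) by ring, hFi]
    ring
  | pred i ih =>
    intro k
    have h1 := ih (k - 1)
    have e : k + (-(i : ℤ) - 1) = k - 1 + -(i:ℤ) := by ring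
    rw [e, h1]
    have hFi : F (-(i : ℤ) - 1 - 1) = F (-(i:ℤ) - 1 + 1) - F (-(i:ℤ) - 1) := by
      have := hF (-(i : ℤ) - 1 - 1)
      rw [show -(i:ℤ) - 1 - 1 + 2 = -(i:ℤ) - 1 + 1 by ring, show -(i:ℤ) - 1 - 1 + 1 = -(i:ℤ) - 1 by ring] at this
      linarith
    have hGk : G (k - 1) = G (k + 1) - G k := by
      have := hG (k - 1); rw [show k - 1 + 2 = k + 1 by ring, show k - 1 + 1 = k by ring] at this
      linarith
    rw [show k - 1 + 1 = k by ring, hGk, hFi, show -(i:ℤ) - 1 + 1 = -(i:ℤ) by ring]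
    ring

theorem gib_key (F : ℤ → ℤ) (hF0 : F 0 = 0) (hF1 : F 1 = 1)
    (hF : ∀ k : ℤ, F (k + 2) = F (k + 1) + F k)
    (G : ℤ → ℤ) (hG : ∀ k : ℤ, G (k + 2) = G (k + 1) + G k)
    (hadd : ∀ m k : ℤ, G (k + m) = F m * G (k + 1) + F (m - 1) * G k) (m k : ℤ) :
    F (m + 2) * G (k + 3) + F (m - 3) * G (k - 2) = 5 * G (k + m) := by
  have hFm1 : F (m - 1) = F (m + 1) - F m := by
    have := hF (m - 1)
    rw [show m - 1 + 2 = m + 1 by ring, show m - 1 + 1 = m by ring] at this; linarith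
  have hFm2 : F (m - 2) = F m - F (m - 1) := by
    have := hF (m - 2)
    rw [show m - 2 + 2 = m by ring, show m - 2 + 1 = m - 1 by ring] at this; linarith
  have hFm3 : F (m - 3) = 2 * F (m + 1) - 3 * F m := by
    have := hF (m - 3)
    rw [show m - 3 + 2 = m - 1 by ring, show m - 3 + 1 = m - 2 by ring] at this
    rw [hFm1] at this; rw [hFm2, hFm1] at this; linarith
  have hFp2 : F (m + 2) = F (m + 1) + F m := hF m
  have hG3 : G (k + 3) = 2 * G (k + 1) + G k := by
    have h1 := hG (k + 1)
    have h2 := hG k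
    rw [show k + 1 + 2 = k + 3 by ring, show k + 1 + 1 = k + 2 by ring] at h1; linarith
  have hG2 : G (k - 2) = 2 * G k - G (k + 1) := by
    have h1 := hG (k - 2)
    have h2 := hG (k - 1)
    rw [show k - 2 + 2 = k by ring, show k - 2 + 1 = k - 1 by ring] at h1
    rw [show k - 1 + 2 = k + 1 by ring, show k - 1 + 1 = k by ring] at h2; linarith
  rw [hFp2, hFm3, hG3, hG2, hadd m k, hFm1]
  ring

theorem reciprocal_sum (F : ℤ → ℤ) (hF0 : F 0 = 0) (hF1 : F 1 = 1)
    (hF : ∀ k : ℤ, F (k + 2) = F (k + 1) + F k)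
    (G : ℤ → ℤ) (hG : ∀ k : ℤ, G (k + 2) = G (k + 1) + G k) (n : ℕ) (m t : ℤ)
    (hGnz : ∀ k : ℤ, t - 1 ≤ k → k ≤ (n : ℤ) + t + 3 → G k ≠ 0) :
    ∑ j ∈ Finset.Icc 1 n,
        ((((-F (m + 2)) ^ (n - j) * F (m - 3) ^ (j - 1) * G ((j : ℤ) + t + m) : ℤ) : ℚ) /
          ((G ((j : ℤ) + t - 2) : ℚ) * (G ((j : ℤ) + t - 1) : ℚ) * (G ((j : ℤ) + t) : ℚ) *
            (G ((j : ℤ) + t + 1) : ℚ) * (G ((j : ℤ) + t + 2) : ℚ) * (G ((j : ℤ) + t + 3) : ℚ))) =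
      ((F (m - 3) ^ n : ℤ) : ℚ) /
          (5 * (G ((n : ℤ) + t - 1) : ℚ) * (G ((n : ℤ) + t) : ℚ) * (G ((n : ℤ) + t + 1) : ℚ) *
            (G ((n : ℤ) + t + 2) : ℚ) * (G ((n : ℤ) + t + 3) : ℚ)) -
        (((-F (m + 2)) ^ n : ℤ) : ℚ) /
          (5 * (G (t - 1) : ℚ) * (G t : ℚ) * (G (t + 1) : ℚ) * (G (t + 2) : ℚ) * (G (t + 3) : ℚ)) := by
  have hadd := gib_add F hF0 hF1 hF G hG
  have K : ∀ k : ℤ, F (m + 2) * G (k + 3) + F (m - 3) * G (k - 2) = 5 * G (k + m) :=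
    fun k => gib_key F hF0 hF1 hF G hG hadd m k
  set f : ℕ → ℚ := fun i =>
    (-(F (m + 2) : ℚ)) ^ (n - i) * (F (m - 3) : ℚ) ^ i /
      (5 * (G ((i : ℤ) + t - 1) : ℚ) * (G ((i : ℤ) + t) : ℚ) * (G ((i : ℤ) + t + 1) : ℚ) *
        (G ((i : ℤ) + t + 2) : ℚ) * (G ((i : ℤ) + t + 3) : ℚ)) with hf
  rw [← Finset.Ico_add_one_right_eq_Icc, Finset.sum_Ico_eq_sum_range]
  norm_num
  have hfn : f n - f 0 =
      ((F (m - 3) : ℤ) : ℚ) ^ n /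
          (5 * (G ((n : ℤ) + t - 1) : ℚ) * (G ((n : ℤ) + t) : ℚ) * (G ((n : ℤ) + t + 1) : ℚ) *
            (G ((n : ℤ) + t + 2) : ℚ) * (G ((n : ℤ) + t + 3) : ℚ)) -
        (-((F (m + 2) : ℤ) : ℚ)) ^ n /
          (5 * (G (t - 1) : ℚ) * (G t : ℚ) * (G (t + 1) : ℚ) * (G (t + 2) : ℚ) * (G (t + 3) : ℚ)) := by
    simp only [hf, Nat.sub_self, pow_zero, Nat.sub_zero, Nat.cast_zero]
    norm_num
  rw [← hfn, ← Finset.sum_range_sub f]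
  refine Finset.sum_congr rfl fun i hi => ?_
  have hin : i < n := Finset.mem_range.mp hi
  have hnz : ∀ a : ℤ, t - 1 ≤ a → a ≤ (n:ℤ) + t + 3 → (G a : ℚ) ≠ 0 := fun a h1 h2 =>
    Int.cast_ne_zero.mpr (hGnz a h1 h2)
  have g1 : (G (1 + (i:ℤ) + t - 2) : ℚ) ≠ 0 := hnz _ (by omega) (by omega)
  have g2 : (G (1 + (i:ℤ) + t - 1) : ℚ) ≠ 0 := hnz _ (by omega) (by omega)
  have g3 : (G (1 + (i:ℤ) + t) : ℚ) ≠ 0 := hnz _ (by omega) (by omega)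
  have g4 : (G (1 + (i:ℤ) + t + 1) : ℚ) ≠ 0 := hnz _ (by omega) (by omega)
  have g5 : (G (1 + (i:ℤ) + t + 2) : ℚ) ≠ 0 := hnz _ (by omega) (by omega)
  have g6 : (G (1 + (i:ℤ) + t + 3) : ℚ) ≠ 0 := hnz _ (by omega) (by omega)
  have g1' : (G ((i:ℤ) + t - 1) : ℚ) ≠ 0 := hnz _ (by omega) (by omega)
  have g2' : (G ((i:ℤ) + t) : ℚ) ≠ 0 := hnz _ (by omega) (by omega)
  have g3' : (G ((i:ℤ) + t + 1) : ℚ) ≠ 0 := hnz _ (by omega) (by omega)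
  have g4' : (G ((i:ℤ) + t + 2) : ℚ) ≠ 0 := hnz _ (by omega) (by omega)
  have g5' : (G ((i:ℤ) + t + 3) : ℚ) ≠ 0 := hnz _ (by omega) (by omega)
  have g6' : (G ((i:ℤ) + 1 + t - 1) : ℚ) ≠ 0 := hnz _ (by omega) (by omega)
  have g7' : (G ((i:ℤ) + 1 + t) : ℚ) ≠ 0 := hnz _ (by omega) (by omega)
  have g8' : (G ((i:ℤ) + 1 + t + 1) : ℚ) ≠ 0 := hnz _ (by omega) (by omega)
  have g9' : (G ((i:ℤ) + 1 + t + 2) : ℚ) ≠ 0 := hnz _ (by omega) (by omega)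
  have g10' : (G ((i:ℤ) + 1 + t + 3) : ℚ) ≠ 0 := hnz _ (by omega) (by omega)
  have hgm : (G (1 + (i:ℤ) + t + m) : ℚ) =
      ((F (m + 2) : ℚ) * (G (1 + (i:ℤ) + t + 3) : ℚ) +
        (F (m - 3) : ℚ) * (G (1 + (i:ℤ) + t - 2) : ℚ)) / 5 := by
    rw [eq_div_iff (by norm_num : (5:ℚ) ≠ 0)]
    exact_mod_cast (by linarith [K (1 + (i:ℤ) + t)] :
      G (1 + (i:ℤ) + t + m) * 5 = F (m + 2) * G (1 + (i:ℤ) + t + 3) + F (m - 3) * G (1 + (i:ℤ) + t - 2))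
  have h1 : (1:ℕ) + i = i + 1 := by omega
  have hpow : (-(F (m + 2) : ℚ)) ^ (n - i) =
      (-(F (m + 2) : ℚ)) ^ (n - (i + 1)) * (-(F (m + 2) : ℚ)) := by
    rw [← pow_succ]; congr 1; omega
  simp only [hf]
  push_cast
  rw [h1, hgm, hpow]
  field_simp
  ring_nf
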